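/- Let A be an n×n symmetric positive definite real matrix, A₀ an n×n symmetric positive definite matrix, S ∈ ℝ^{n×k} with full column rank, and W₀ a symmetric n×n matrix with W₀S = AS. Set Δ = AS − A₀S, Λ = SᵀW₀S, U = W₀S Λ⁻¹, and V = (I − ½USᵀ)Δ. Then Uᵀ A₀⁻¹ U is invertible, and the Schur complement of the block Uᵀ A₀⁻¹ U in the block matrix [[UᵀA₀⁻¹U, I + UᵀA₀⁻¹V], [I + VᵀA₀⁻¹U, VᵀA₀⁻¹V]] equals −Λ; that is, VᵀA₀⁻¹V − (I + VᵀA₀⁻¹U)(UᵀA₀⁻¹U)⁻¹(I + UᵀA₀⁻¹V) = −Λ. -/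

import Mathlib

open Matrix

lemma aux_mulVec_inj {n k : ℕ} (S : Matrix (Fin n) (Fin k) ℝ) (h : S.rank = k) :
    Function.Injective S.mulVec := by
  have h1 := LinearMap.finrank_range_add_finrank_ker S.mulVecLin
  rw [Module.finrank_fintype_fun_eq_card, Fintype.card_fin] at h1
  rw [Matrix.rank] at h
  have hker : LinearMap.ker S.mulVecLin = ⊥ :=
    Submodule.finrank_eq_zero.mp (by omega)
  exact LinearMap.ker_eq_bot.mp hker

lemma aux_posdef_conj {n k : ℕ} {B : Matrix (Fin n) (Fin n) ℝ} (hB : B.PosDef)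
    (S : Matrix (Fin n) (Fin k) ℝ) (hS : Function.Injective S.mulVec) :
    (Sᵀ * B * S).PosDef := by
  refine Matrix.PosDef.of_dotProduct_mulVec_pos ?_ ?_
  · have h := Matrix.isHermitian_conjTranspose_mul_mul S hB.1
    simpa [Matrix.conjTranspose_eq_transpose_of_trivial] using h
  · intro x hx
    have hSx : S *ᵥ x ≠ 0 := fun hc => hx (hS (by rw [hc, Matrix.mulVec_zero]))
    have h2 := hB.dotProduct_mulVec_pos hSx
    have : Sᵀ = Sᴴ := (Matrix.conjTranspose_eq_transpose_of_trivial S).symm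
    rw [this]
    simpa only [star_mulVec, Matrix.dotProduct_mulVec, Matrix.vecMul_vecMul] using h2

theorem stmt_15
    {n k : ℕ} (A A₀ : Matrix (Fin n) (Fin n) ℝ) (hA : A.PosDef) (hA₀ : A₀.PosDef)
    (S : Matrix (Fin n) (Fin k) ℝ) (hrank : S.rank = k)
    (W₀ : Matrix (Fin n) (Fin n) ℝ) (hW₀ : W₀.IsSymm) (hW₀S : W₀ * S = A * S) :
    let Δ := A * S - A₀ * S
    let Λ := Sᵀ * W₀ * S
    let U := W₀ * S * Λ⁻¹
    let V := (1 - (1 / 2 : ℝ) • (U * Sᵀ)) * Δ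
    IsUnit (Uᵀ * A₀⁻¹ * U).det ∧
      Vᵀ * A₀⁻¹ * V
        - (1 + Vᵀ * A₀⁻¹ * U) * (Uᵀ * A₀⁻¹ * U)⁻¹ * (1 + Uᵀ * A₀⁻¹ * V) = -Λ := by
  intro Δ Λ U V
  have hΔ0 : Δ = A * S - A₀ * S := rfl
  have hΛ0 : Λ = Sᵀ * W₀ * S := rfl
  have hU0 : U = W₀ * S * Λ⁻¹ := rfl
  have hV0 : V = (1 - (1 / 2 : ℝ) • (U * Sᵀ)) * Δ := rfl
  -- symmetry facts
  have hAs : Aᵀ = A := by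
    have := hA.1.eq
    simpa [Matrix.conjTranspose_eq_transpose_of_trivial] using this
  have hA₀s : A₀ᵀ = A₀ := by
    have := hA₀.1.eq
    simpa [Matrix.conjTranspose_eq_transpose_of_trivial] using this
  have hA₀det : IsUnit A₀.det := isUnit_iff_ne_zero.mpr hA₀.det_pos.ne'
  have hQs : (A₀⁻¹)ᵀ = A₀⁻¹ := by rw [Matrix.transpose_nonsing_inv, hA₀s]
  -- injectivity
  have hSinj : Function.Injective S.mulVec := aux_mulVec_inj S hrank
  have hAinj : Function.Injective A.mulVec :=
    mulVec_injective_iff_isUnit.mpr ((Matrix.isUnit_iff_isUnit_det A).mpr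
      (isUnit_iff_ne_zero.mpr hA.det_pos.ne'))
  have hASinj : Function.Injective (A * S).mulVec := by
    have : (A * S).mulVec = A.mulVec ∘ S.mulVec := by
      funext x; simp [Matrix.mulVec_mulVec]
    rw [this]; exact hAinj.comp hSinj
  -- the two key k×k positive definite matrices, in right-associated form
  have hLpd : (Sᵀ * (A * S)).PosDef := by
    have := aux_posdef_conj hA S hSinj
    rwa [Matrix.mul_assoc] at this
  have hGpd : (Sᵀ * (A * (A₀⁻¹ * (A * S)))).PosDef := by
    have := aux_posdef_conj hA₀.inv (A * S) hASinj
    simpa only [Matrix.transpose_mul, hAs, Matrix.mul_assoc] using this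
  have hLdet : IsUnit (Sᵀ * (A * S)).det := isUnit_iff_ne_zero.mpr hLpd.det_pos.ne'
  have hGdet : IsUnit (Sᵀ * (A * (A₀⁻¹ * (A * S)))).det :=
    isUnit_iff_ne_zero.mpr hGpd.det_pos.ne'
  have hLs : (Sᵀ * (A * S))ᵀ = Sᵀ * (A * S) := by
    have := hLpd.1.eq
    simpa [Matrix.conjTranspose_eq_transpose_of_trivial] using this
  have hGs : (Sᵀ * (A * (A₀⁻¹ * (A * S))))ᵀ = Sᵀ * (A * (A₀⁻¹ * (A * S))) := by
    have := hGpd.1.eq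
    simpa [Matrix.conjTranspose_eq_transpose_of_trivial] using this
  have hLis : ((Sᵀ * (A * S))⁻¹)ᵀ = (Sᵀ * (A * S))⁻¹ := by
    rw [Matrix.transpose_nonsing_inv, hLs]
  have hGis : ((Sᵀ * (A * (A₀⁻¹ * (A * S))))⁻¹)ᵀ = (Sᵀ * (A * (A₀⁻¹ * (A * S))))⁻¹ := by
    rw [Matrix.transpose_nonsing_inv, hGs]
  -- expressions for Λ, U, V without W₀
  have hΛ' : Λ = Sᵀ * (A * S) := by rw [hΛ0, Matrix.mul_assoc, hW₀S]
  have hU' : U = A * S * (Sᵀ * (A * S))⁻¹ := by rw [hU0, hW₀S, hΛ']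
  have hV' : V = (1 - (1 / 2 : ℝ) • (A * S * (Sᵀ * (A * S))⁻¹ * Sᵀ)) * (A * S - A₀ * S) := by
    rw [hV0, hU', hΔ0]
  -- UᵀA₀⁻¹U
  have hM : Uᵀ * A₀⁻¹ * U
      = (Sᵀ * (A * S))⁻¹ * (Sᵀ * (A * (A₀⁻¹ * (A * S)))) * (Sᵀ * (A * S))⁻¹ := by
    rw [hU']
    simp only [Matrix.transpose_mul, hAs, Matrix.transpose_transpose, hLis, Matrix.mul_assoc]
  have hMinv : (Uᵀ * A₀⁻¹ * U)⁻¹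
      = Sᵀ * (A * S) * (Sᵀ * (A * (A₀⁻¹ * (A * S))))⁻¹ * (Sᵀ * (A * S)) := by
    rw [hM, Matrix.mul_inv_rev, Matrix.mul_inv_rev,
      Matrix.nonsing_inv_nonsing_inv _ hLdet, ← Matrix.mul_assoc]
  refine ⟨?_, ?_⟩
  · rw [hM, Matrix.det_mul, Matrix.det_mul]
    exact ((Matrix.isUnit_nonsing_inv_det _ hLdet).mul hGdet).mul
      (Matrix.isUnit_nonsing_inv_det _ hLdet)
  -- cancellation lemmas
  have cQ1 : ∀ (j : ℕ) (X : Matrix (Fin n) (Fin j) ℝ), A₀⁻¹ * (A₀ * X) = X := by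
    intro j X; rw [← Matrix.mul_assoc, Matrix.nonsing_inv_mul _ hA₀det, Matrix.one_mul]
  have cQ2 : ∀ (j : ℕ) (X : Matrix (Fin n) (Fin j) ℝ), A₀ * (A₀⁻¹ * X) = X := by
    intro j X; rw [← Matrix.mul_assoc, Matrix.mul_nonsing_inv _ hA₀det, Matrix.one_mul]
  have cQ3 : A₀⁻¹ * A₀ = 1 := Matrix.nonsing_inv_mul _ hA₀det
  have cQ4 : A₀ * A₀⁻¹ = 1 := Matrix.mul_nonsing_inv _ hA₀det
  have cL1 : ∀ (j : ℕ) (X : Matrix (Fin k) (Fin j) ℝ),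
      (Sᵀ * (A * S))⁻¹ * (Sᵀ * (A * (S * X))) = X := by
    intro j X
    have h : Sᵀ * (A * (S * X)) = (Sᵀ * (A * S)) * X := by
      simp only [Matrix.mul_assoc]
    rw [h, ← Matrix.mul_assoc, Matrix.nonsing_inv_mul _ hLdet, Matrix.one_mul]
  have cL2 : ∀ (j : ℕ) (X : Matrix (Fin k) (Fin j) ℝ),
      Sᵀ * (A * (S * ((Sᵀ * (A * S))⁻¹ * X))) = X := by
    intro j X
    have h : Sᵀ * (A * (S * ((Sᵀ * (A * S))⁻¹ * X))) = (Sᵀ * (A * S)) * ((Sᵀ * (A * S))⁻¹ * X) := by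
      simp only [Matrix.mul_assoc]
    rw [h, ← Matrix.mul_assoc, Matrix.mul_nonsing_inv _ hLdet, Matrix.one_mul]
  have cL3 : (Sᵀ * (A * S))⁻¹ * (Sᵀ * (A * S)) = 1 := Matrix.nonsing_inv_mul _ hLdet
  have cL4 : Sᵀ * (A * (S * (Sᵀ * (A * S))⁻¹)) = 1 := by
    have h : Sᵀ * (A * (S * (Sᵀ * (A * S))⁻¹)) = (Sᵀ * (A * S)) * (Sᵀ * (A * S))⁻¹ := by
      simp only [Matrix.mul_assoc]
    rw [h, Matrix.mul_nonsing_inv _ hLdet]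
  have cG1 : ∀ (j : ℕ) (X : Matrix (Fin k) (Fin j) ℝ),
      (Sᵀ * (A * (A₀⁻¹ * (A * S))))⁻¹ * (Sᵀ * (A * (A₀⁻¹ * (A * (S * X))))) = X := by
    intro j X
    have h : Sᵀ * (A * (A₀⁻¹ * (A * (S * X)))) = (Sᵀ * (A * (A₀⁻¹ * (A * S)))) * X := by
      simp only [Matrix.mul_assoc]
    rw [h, ← Matrix.mul_assoc, Matrix.nonsing_inv_mul _ hGdet, Matrix.one_mul]
  have cG2 : ∀ (j : ℕ) (X : Matrix (Fin k) (Fin j) ℝ),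
      Sᵀ * (A * (A₀⁻¹ * (A * (S * ((Sᵀ * (A * (A₀⁻¹ * (A * S))))⁻¹ * X))))) = X := by
    intro j X
    have h : Sᵀ * (A * (A₀⁻¹ * (A * (S * ((Sᵀ * (A * (A₀⁻¹ * (A * S))))⁻¹ * X)))))
        = (Sᵀ * (A * (A₀⁻¹ * (A * S)))) * ((Sᵀ * (A * (A₀⁻¹ * (A * S))))⁻¹ * X) := by
      simp only [Matrix.mul_assoc]
    rw [h, ← Matrix.mul_assoc, Matrix.mul_nonsing_inv _ hGdet, Matrix.one_mul]
  have cG3 : (Sᵀ * (A * (A₀⁻¹ * (A * S))))⁻¹ * (Sᵀ * (A * (A₀⁻¹ * (A * S)))) = 1 :=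
    Matrix.nonsing_inv_mul _ hGdet
  have cG4 : Sᵀ * (A * (A₀⁻¹ * (A * (S * (Sᵀ * (A * (A₀⁻¹ * (A * S))))⁻¹)))) = 1 := by
    have h : Sᵀ * (A * (A₀⁻¹ * (A * (S * (Sᵀ * (A * (A₀⁻¹ * (A * S))))⁻¹))))
        = (Sᵀ * (A * (A₀⁻¹ * (A * S)))) * (Sᵀ * (A * (A₀⁻¹ * (A * S))))⁻¹ := by
      simp only [Matrix.mul_assoc]
    rw [h, Matrix.mul_nonsing_inv _ hGdet]
  -- main computation
  rw [hMinv, hV', hU', hΛ']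
  simp only [Matrix.transpose_mul, Matrix.transpose_sub, Matrix.transpose_smul,
    Matrix.transpose_one, Matrix.transpose_transpose, hAs, hA₀s, hQs, hLis, hGis,
    Matrix.sub_mul, Matrix.mul_sub, Matrix.add_mul, Matrix.mul_add, smul_mul_assoc, Matrix.smul_mul, Matrix.mul_smul, smul_smul,
    mul_smul_comm, Matrix.mul_one, Matrix.one_mul, Matrix.mul_assoc,
    cQ1, cQ2, cQ3, cQ4, cL1, cL2, cL3, cL4, cG1, cG2, cG3, cG4]
  module
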